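/- arXiv:2211.00438 — 7 statements merged into one kernel-verified Lean document; each statement's English description precedes it below -/
import Mathlib

section
/- Let p be a prime, f ≥ 1, and work in the polynomial ring F[b_0,…,b_{f-1}, x_0,…,x_{f-1}] over a field F of characteristic p. The coefficient of ∏_{j=0}^{f-1} x_j^{p-1} in the polynomial ∏_{j=0}^{f-1} (Σ_{i=0}^{f-1} b_i^{p^j} x_i)^{p-1} equals (-1)^{(p^f-1)/(p-1)} · ∏_{c ∈ 𝔽_p^f \ {0}} (Σ_{i=0}^{f-1} c_i b_i), viewed as a polynomial in b_0,…,b_{f-1}. -/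
open Finset


-- digit sum lemmas
lemma digitSum_le_of_lt_pow {p : ℕ} (hp : 2 ≤ p) :
    ∀ f k, k < p ^ f → (p.digits k).sum ≤ f * (p - 1) := by
  intro f
  induction f with
  | zero =>
    intro k hk
    simp only [pow_zero, Nat.lt_one_iff] at hk
    subst hk; simp
  | succ f ih =>
    intro k hk
    rcases Nat.eq_zero_or_pos k with rfl | hk0
    · simp
    rw [Nat.digits_def' (by omega : 1 < p) hk0, List.sum_cons]
    have h1 : k % p ≤ p - 1 := by
      have := Nat.mod_lt k (show 0 < p by omega); omega
    have h2 : k / p < p ^ f := by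
      rw [Nat.div_lt_iff_lt_mul (by omega : 0 < p)]
      rw [pow_succ] at hk; exact hk
    have h3 := ih _ h2
    rw [Nat.succ_mul]
    omega

lemma eq_pow_sub_one_of_digitSum {p : ℕ} (hp : 2 ≤ p) :
    ∀ f k, k < p ^ f → f * (p - 1) ≤ (p.digits k).sum → k = p ^ f - 1 := by
  intro f
  induction f with
  | zero => intro k hk _; simpa using hk
  | succ f ih =>
    intro k hk hs
    rcases Nat.eq_zero_or_pos k with rfl | hk0
    · exfalso
      have : 0 < (f + 1) * (p - 1) := Nat.mul_pos (Nat.succ_pos f) (by omega)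
      simp only [Nat.digits_zero, List.sum_nil] at hs
      omega
    rw [Nat.digits_def' (by omega : 1 < p) hk0, List.sum_cons] at hs
    have h2 : k / p < p ^ f := by
      rw [Nat.div_lt_iff_lt_mul (by omega : 0 < p)]
      rw [pow_succ] at hk; exact hk
    have hle : (p.digits (k / p)).sum ≤ f * (p - 1) := digitSum_le_of_lt_pow hp f _ h2
    have h1 : k % p < p := Nat.mod_lt k (by omega)
    have hsm : (f + 1) * (p - 1) = f * (p - 1) + (p - 1) := Nat.succ_mul _ _
    have hdiv : k / p = p ^ f - 1 := ih _ h2 (by omega)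
    have hmod : k % p = p - 1 := by omega
    have hk' : p * (k / p) + k % p = k := Nat.div_add_mod k p
    have hpf : 0 < p ^ f := Nat.pow_pos (n := f) (by omega)
    have e1 : p * (p ^ f - 1) + p = p * p ^ f := by
      have h := Nat.mul_sub p (p ^ f) 1
      have : p ≤ p * p ^ f := Nat.le_mul_of_pos_right p hpf
      omega
    rw [pow_succ]
    rw [hdiv, hmod] at hk'
    have : p ^ f * p = p * p ^ f := mul_comm _ _
    omega

lemma sub_one_le_digitSum {p : ℕ} (hp : 2 ≤ p) {e : ℕ} (he : e ≠ 0) (hd : (p - 1) ∣ e) :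
    p - 1 ≤ (p.digits e).sum := by
  have hne : p.digits e ≠ [] := Nat.digits_ne_nil_iff_ne_zero.mpr he
  have hlast := Nat.getLast_digit_ne_zero p he
  have hmem := List.getLast_mem hne
  have hpos : 0 < (p.digits e).sum := by
    have := List.single_le_sum (fun (x : ℕ) _ => Nat.zero_le x) _ hmem
    omega
  rcases Nat.lt_or_ge p 3 with h3 | h3
  · omega
  · have hmodp : p % (p - 1) = 1 := by
      have h1 : p = 1 + 1 * (p - 1) := by omega
      nth_rewrite 1 [h1]
      rw [Nat.add_mul_mod_self_right, Nat.one_mod_eq_one.mpr (by omega)]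
    have hmod : e ≡ (p.digits e).sum [MOD p - 1] :=
      Nat.modEq_digits_sum (p - 1) p hmodp e
    have h0 : e ≡ 0 [MOD p - 1] := (Nat.modEq_zero_iff_dvd).mpr hd
    have : (p - 1) ∣ (p.digits e).sum := (Nat.modEq_zero_iff_dvd).mp (hmod.symm.trans h0)
    exact Nat.le_of_dvd hpos this

lemma padicValNat_prod {p : ℕ} [hp : Fact p.Prime] {ι : Type*} (s : Finset ι) (g : ι → ℕ)
    (h : ∀ i ∈ s, g i ≠ 0) :
    padicValNat p (∏ i ∈ s, g i) = ∑ i ∈ s, padicValNat p (g i) := by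
  induction s using Finset.cons_induction with
  | empty => simp
  | cons a s ha ih =>
    rw [Finset.prod_cons, Finset.sum_cons,
      padicValNat.mul (h a (Finset.mem_cons_self a s))
        (Finset.prod_ne_zero_iff.mpr fun i hi => h i (Finset.mem_cons_of_mem hi)),
      ih fun i hi => h i (Finset.mem_cons_of_mem hi)]

lemma zmod_sum_pow (p : ℕ) [Fact p.Prime] (e : ℕ) :
    ∑ t : ZMod p, t ^ e = if e ≠ 0 ∧ (p - 1) ∣ e then -1 else 0 := by
  have hp : p.Prime := Fact.out
  have hcard : Fintype.card (ZMod p) = p := ZMod.card p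
  rcases eq_or_ne e 0 with rfl | he
  · simp only [ne_eq, not_true_eq_false, false_and, if_false, pow_zero]
    rw [Finset.sum_const, Finset.card_univ, hcard, nsmul_eq_mul, mul_one, ZMod.natCast_self]
  · classical
    let φ : (ZMod p)ˣ ↪ ZMod p := ⟨fun x => (x : ZMod p), fun _ _ => Units.ext⟩
    have hmap : (univ : Finset (ZMod p)ˣ).map φ = univ \ {0} := by
      ext x
      simp only [mem_map, mem_univ, Function.Embedding.coeFn_mk, true_and, mem_sdiff,
        mem_singleton, φ]
      exact isUnit_iff_ne_zero
    have h1 : ∑ t : ZMod p, t ^ e = ∑ t ∈ (univ : Finset (ZMod p)) \ {0}, t ^ e := by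
      rw [← Finset.sum_sdiff (Finset.subset_univ {0}), Finset.sum_singleton, zero_pow he,
        add_zero]
    have h3 : ∑ t ∈ (univ : Finset (ZMod p)) \ {0}, t ^ e = ∑ x : (ZMod p)ˣ, ((x : ZMod p)) ^ e := by
      rw [← hmap, Finset.sum_map]
      simp [φ]
      rfl
    have h4 := FiniteField.sum_pow_units (ZMod p) e
    rw [hcard] at h4
    simp only [ne_eq, he, not_false_eq_true, true_and]
    rw [h1, h3, ← h4]

lemma p_dvd_multinomial (p : ℕ) [Fact p.Prime] {f : ℕ} (e : Fin f → ℕ)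
    (h1 : ∀ i, e i ≠ 0) (h2 : ∀ i, (p - 1) ∣ e i) (hk : ∑ i, e i < p ^ f - 1) :
    p ∣ Nat.multinomial Finset.univ e := by
  have hp : p.Prime := Fact.out
  have hp2 : 2 ≤ p := hp.two_le
  by_contra hnd
  have hval : padicValNat p (Nat.multinomial univ e) = 0 := padicValNat.eq_zero_of_not_dvd hnd
  set k := ∑ i, e i with hkdef
  have hspec : (∏ i, Nat.factorial (e i)) * Nat.multinomial univ e = Nat.factorial k := Nat.multinomial_spec univ e
  have hmultne : Nat.multinomial univ e ≠ 0 := (Nat.multinomial_pos _ _).ne'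
  have hfacne : ∀ i : Fin f, Nat.factorial (e i) ≠ 0 := fun i => Nat.factorial_ne_zero _
  -- valuation of k!
  have hv1 : padicValNat p (Nat.factorial k) = (∑ i, padicValNat p (Nat.factorial (e i))) + padicValNat p (Nat.multinomial univ e) := by
    rw [← hspec, padicValNat.mul (Finset.prod_ne_zero_iff.mpr fun i _ => hfacne i) hmultne,
      padicValNat_prod _ _ fun i _ => hfacne i]
  rw [hval, add_zero] at hv1
  -- Legendre
  have legk : (p - 1) * padicValNat p (Nat.factorial k) = k - (p.digits k).sum :=
    sub_one_mul_padicValNat_factorial k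
  have hSk : (p.digits k).sum ≤ k := Nat.digit_sum_le p k
  have lege : ∀ i : Fin f, e i = (p - 1) * padicValNat p (Nat.factorial (e i)) + (p.digits (e i)).sum := by
    intro i
    have := sub_one_mul_padicValNat_factorial (p := p) (e i)
    have h := Nat.digit_sum_le p (e i)
    omega
  have hksum : k = (p - 1) * (∑ i, padicValNat p (Nat.factorial (e i))) + ∑ i, (p.digits (e i)).sum := by
    rw [hkdef]
    calc ∑ i, e i = ∑ i, ((p - 1) * padicValNat p (Nat.factorial (e i)) + (p.digits (e i)).sum) :=
          Finset.sum_congr rfl fun i _ => lege i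
      _ = _ := by rw [Finset.sum_add_distrib, Finset.mul_sum]
  have hksum2 : k = (p - 1) * (∑ i, padicValNat p (Nat.factorial (e i))) + (p.digits k).sum := by
    rw [← hv1] at *
    omega
  have hSe : f * (p - 1) ≤ ∑ i, (p.digits (e i)).sum := by
    calc f * (p - 1) = ∑ _i : Fin f, (p - 1) := by
          rw [Finset.sum_const, Finset.card_univ, Fintype.card_fin, smul_eq_mul]
      _ ≤ _ := Finset.sum_le_sum fun i _ => sub_one_le_digitSum hp2 (h1 i) (h2 i)
  have hfin : f * (p - 1) ≤ (p.digits k).sum := by omega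
  have hklt : k < p ^ f := by
    have : 1 ≤ p ^ f := Nat.one_le_pow _ _ (by omega)
    omega
  have := eq_pow_sub_one_of_digitSum hp2 f k hklt hfin
  omega

lemma sum_lin_pow_eq_zero (p : ℕ) [Fact p.Prime] {f : ℕ} {A : Type*} [CommRing A] [CharP A p]
    (b : Fin f → A) {k : ℕ} (_hk0 : k ≠ 0) (hk : k < p ^ f - 1) :
    ∑ c : Fin f → ZMod p, (∑ i, (ZMod.castHom (dvd_refl p) A (c i)) * b i) ^ k = 0 := by
  classical
  simp_rw [Finset.sum_pow_eq_sum_piAntidiag]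
  rw [Finset.sum_comm]
  apply Finset.sum_eq_zero
  intro e he
  rw [Finset.mem_piAntidiag] at he
  obtain ⟨hesum, -⟩ := he
  simp_rw [mul_pow, Finset.prod_mul_distrib, ← mul_assoc]
  rw [← Finset.sum_mul, ← Finset.mul_sum]
  -- inner sum over c of ∏ cast(c i)^(e i)
  have hswap : ∑ c : Fin f → ZMod p, ∏ i, (ZMod.castHom (dvd_refl p) A (c i)) ^ e i
      = ∏ i, ∑ t : ZMod p, (ZMod.castHom (dvd_refl p) A t) ^ e i := by
    rw [Finset.prod_univ_sum]
    rw [Fintype.piFinset_univ]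
  rw [hswap]
  by_cases hgood : ∀ i, e i ≠ 0 ∧ (p - 1) ∣ e i
  · -- multinomial divisible by p
    have hdvd : p ∣ Nat.multinomial Finset.univ e :=
      p_dvd_multinomial p e (fun i => (hgood i).1) (fun i => (hgood i).2) (hesum ▸ hk)
    have : ((Nat.multinomial Finset.univ e : ℕ) : A) = 0 :=
      (CharP.cast_eq_zero_iff A p _).mpr hdvd
    rw [this, zero_mul, zero_mul]
  · push_neg at hgood
    obtain ⟨i0, hbad⟩ := hgood
    have hzero : ∑ t : ZMod p, (ZMod.castHom (dvd_refl p) A t) ^ e i0 = 0 := by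
      have : ∑ t : ZMod p, (ZMod.castHom (dvd_refl p) A t) ^ e i0
          = ZMod.castHom (dvd_refl p) A (∑ t : ZMod p, t ^ e i0) := by
        rw [map_sum]
        simp_rw [map_pow]
      rw [this, zmod_sum_pow]
      by_cases h0 : e i0 = 0
      · simp [h0]
      · rw [if_neg, map_zero]
        intro hcon
        exact hbad h0 hcon.2
    rw [Finset.prod_eq_zero (Finset.mem_univ i0) hzero, mul_zero, zero_mul]

lemma coeff_eq_sum_eval (p : ℕ) [Fact p.Prime] {f : ℕ} {A : Type*} [CommRing A] [CharP A p]
    (Q : MvPolynomial (Fin f) A) (hQ : Q.IsHomogeneous (f * (p - 1))) :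
    ∑ c : Fin f → ZMod p, MvPolynomial.eval (fun i => ZMod.castHom (dvd_refl p) A (c i)) Q
      = (-1) ^ f * MvPolynomial.coeff (Finsupp.equivFunOnFinite.symm fun _ => p - 1) Q := by
  classical
  have hp : p.Prime := Fact.out
  have hp2 : 2 ≤ p := hp.two_le
  set t : (Fin f) →₀ ℕ := Finsupp.equivFunOnFinite.symm fun _ => p - 1 with ht
  have htapp : ∀ i, t i = p - 1 := fun i => rfl
  simp_rw [MvPolynomial.eval_eq']
  rw [Finset.sum_comm]
  have key : ∀ d ∈ Q.support,
      (∑ c : Fin f → ZMod p, Q.coeff d * ∏ i, (ZMod.castHom (dvd_refl p) A (c i)) ^ d i)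
      = if d = t then (-1) ^ f * Q.coeff d else 0 := by
    intro d hd
    have hdeg : ∑ i, d i = f * (p - 1) := by
      have h1 := hQ (MvPolynomial.mem_support_iff.mp hd)
      simp only [Finsupp.weight_apply, Pi.one_apply, smul_eq_mul, mul_one, Finsupp.sum] at h1
      rw [← h1]
      exact (Finset.sum_subset (Finset.subset_univ d.support)
        (fun i _ hi => Finsupp.notMem_support_iff.mp hi)).symm
    rw [← Finset.mul_sum]
    have hswap : ∑ c : Fin f → ZMod p, ∏ i, (ZMod.castHom (dvd_refl p) A (c i)) ^ d i
        = ∏ i, ∑ u : ZMod p, (ZMod.castHom (dvd_refl p) A u) ^ d i := by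
      rw [Finset.prod_univ_sum, Fintype.piFinset_univ]
    rw [hswap]
    have hfac : ∀ i : Fin f, ∑ u : ZMod p, (ZMod.castHom (dvd_refl p) A u) ^ d i
        = ZMod.castHom (dvd_refl p) A (if d i ≠ 0 ∧ (p - 1) ∣ d i then -1 else 0) := by
      intro i
      rw [← zmod_sum_pow p (d i), map_sum]
      simp_rw [map_pow]
    by_cases hdt : d = t
    · rw [if_pos hdt]
      have hdi : ∀ i, d i = p - 1 := fun i => by rw [hdt]; exact htapp i
      have : ∀ i : Fin f, ∑ u : ZMod p, (ZMod.castHom (dvd_refl p) A u) ^ d i = -1 := by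
        intro i
        rw [hfac i, hdi i, if_pos ⟨by omega, dvd_refl _⟩, map_neg, map_one]
      rw [Finset.prod_congr rfl fun i _ => this i, Finset.prod_const, Finset.card_univ,
        Fintype.card_fin, mul_comm]
    · rw [if_neg hdt]
      by_cases hgood : ∀ i, d i ≠ 0 ∧ (p - 1) ∣ d i
      · exfalso
        apply hdt
        have hge : ∀ i : Fin f, p - 1 ≤ d i := fun i =>
          Nat.le_of_dvd (Nat.pos_of_ne_zero (hgood i).1) (hgood i).2
        have hall : ∀ i, d i = p - 1 := by
          by_contra hcon
          push_neg at hcon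
          obtain ⟨i0, hi0⟩ := hcon
          have hlt : ∑ i : Fin f, (fun _ => p - 1) i < ∑ i, d i := by
            apply Finset.sum_lt_sum (fun i _ => hge i)
            exact ⟨i0, Finset.mem_univ i0, by have := hge i0; omega⟩
          rw [hdeg] at hlt
          simp only [Finset.sum_const, Finset.card_univ, Fintype.card_fin, smul_eq_mul] at hlt
          omega
        ext i
        rw [hall i, htapp i]
      · push_neg at hgood
        obtain ⟨i0, hbad⟩ := hgood
        have : ∑ u : ZMod p, (ZMod.castHom (dvd_refl p) A u) ^ d i0 = 0 := by
          rw [hfac i0]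
          by_cases h0 : d i0 = 0
          · rw [if_neg (by simp [h0]), map_zero]
          · rw [if_neg (fun hcon => hbad h0 hcon.2), map_zero]
        rw [Finset.prod_eq_zero (Finset.mem_univ i0) this, mul_zero]
  rw [Finset.sum_congr rfl key, Finset.sum_ite_eq' Q.support t (fun d => (-1) ^ f * Q.coeff d)]
  by_cases hts : t ∈ Q.support
  · rw [if_pos hts]
  · rw [if_neg hts, MvPolynomial.notMem_support_iff.mp hts, mul_zero]

lemma geom_aux {p : ℕ} (hp : 1 ≤ p) : ∀ f : ℕ, (p - 1) * ∑ j ∈ Finset.range f, p ^ j = p ^ f - 1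
  | 0 => by simp
  | f + 1 => by
    have h2 : 1 ≤ p ^ f := Nat.one_le_pow _ _ (by omega)
    rw [Finset.sum_range_succ, mul_add, geom_aux hp f, pow_succ, Nat.sub_mul, one_mul]
    generalize hA : p ^ f = A at *
    have h3 : A * p = p * A := mul_comm _ _
    have h4 : A ≤ p * A := Nat.le_mul_of_pos_left A (by omega)
    omega

lemma sign_aux (p f : ℕ) (hp : p.Prime) {A : Type*} [CommRing A] [CharP A p] :
    (-1 : A) ^ f * (-1) ^ (p ^ f - 1) = (-1) ^ ((p ^ f - 1) / (p - 1)) := by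
  rcases hp.eq_two_or_odd' with rfl | hodd
  · have h1 : (-1 : A) = 1 := by
      have := CharTwo.neg_eq (R := A) 1
      simpa using this
    rw [h1, one_pow, one_pow, one_pow, one_mul]
  · have hp2 : 2 ≤ p := hp.two_le
    have hqodd : Odd (p ^ f) := hodd.pow
    have hmev : Even (p ^ f - 1) := Nat.Odd.sub_odd hqodd odd_one
    rw [Even.neg_one_pow hmev, mul_one]
    have hN : (p ^ f - 1) / (p - 1) = ∑ j ∈ Finset.range f, p ^ j :=
      Nat.div_eq_of_eq_mul_left (by omega)
        (by rw [← geom_aux (by omega : 1 ≤ p) f]; ring)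
    rw [hN]
    have hmod : (∑ j ∈ Finset.range f, p ^ j) % 2 = f % 2 := by
      rw [Finset.sum_nat_mod,
        Finset.sum_congr rfl fun j _ => Nat.odd_iff.mp hodd.pow,
        Finset.sum_const, Finset.card_range, smul_eq_mul, mul_one]
    rcases Nat.even_or_odd f with he | ho
    · have heN : Even (∑ j ∈ Finset.range f, p ^ j) :=
        Nat.even_iff.mpr (by rw [hmod]; exact Nat.even_iff.mp he)
      rw [he.neg_one_pow, heN.neg_one_pow]
    · have hoN : Odd (∑ j ∈ Finset.range f, p ^ j) :=
        Nat.odd_iff.mpr (by rw [hmod]; exact Nat.odd_iff.mp ho)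
      rw [ho.neg_one_pow, hoN.neg_one_pow]

lemma sum_pow_eq_prod (p : ℕ) [Fact p.Prime] {f : ℕ} (hf : 1 ≤ f) {A : Type*} [CommRing A]
    [CharP A p] (b : Fin f → A) :
    ∑ c ∈ Finset.univ.filter (fun c : Fin f → ZMod p => c ≠ 0),
        (∑ i, ZMod.castHom (dvd_refl p) A (c i) * b i) ^ (p ^ f - 1)
      = (-1) ^ (p ^ f - 1) *
        ∏ c ∈ Finset.univ.filter (fun c : Fin f → ZMod p => c ≠ 0),
          (∑ i, ZMod.castHom (dvd_refl p) A (c i) * b i) := by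
  classical
  have hp : p.Prime := Fact.out
  have hp2 : 2 ≤ p := hp.two_le
  haveI : Nontrivial A := CharP.nontrivial_of_char_ne_one (v := p) (by omega)
  set s : Finset (Fin f → ZMod p) := Finset.univ.filter (fun c => c ≠ 0) with hs
  set L : (Fin f → ZMod p) → A := fun c => ∑ i, ZMod.castHom (dvd_refl p) A (c i) * b i with hL
  set m : ℕ := p ^ f - 1 with hm
  have hm1 : 1 ≤ m := by
    have : p ^ 1 ≤ p ^ f := Nat.pow_le_pow_right (by omega) hf
    rw [pow_one] at this
    simp only [hm]; omega
  have hL0 : L 0 = 0 := by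
    simp [hL]
  have hcard : s.card = m := by
    rw [hs, Finset.filter_ne', Finset.card_erase_of_mem (Finset.mem_univ 0), Finset.card_univ]
    rw [Fintype.card_fun, ZMod.card, Fintype.card_fin]
  -- the polynomial with the L c as roots
  set g : Polynomial A := ∏ c ∈ s, (Polynomial.X - Polynomial.C (L c)) with hg
  have hmonic : g.Monic := Polynomial.monic_prod_of_monic _ _ fun c _ => Polynomial.monic_X_sub_C _
  have hdeg : g.natDegree = m := by
    rw [hg, Polynomial.natDegree_prod_of_monic _ _ fun c _ => Polynomial.monic_X_sub_C _]
    simp [Polynomial.natDegree_X_sub_C, hcard]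
  have heval : ∀ c ∈ s, Polynomial.eval (L c) g = 0 := by
    intro c hc
    rw [hg, Polynomial.eval_prod]
    exact Finset.prod_eq_zero hc (by simp)
  have hexp : ∀ c ∈ s, L c ^ m = -∑ k ∈ Finset.range m, g.coeff k * L c ^ k := by
    intro c hc
    have h0 := heval c hc
    rw [Polynomial.eval_eq_sum_range, hdeg, Finset.sum_range_succ, ← hdeg,
      hmonic.coeff_natDegree, one_mul, hdeg] at h0
    linear_combination h0
  rw [Finset.sum_congr rfl hexp, Finset.sum_neg_distrib, Finset.sum_comm]
  -- ∑ k ∈ range m, ∑ c ∈ s, g.coeff k * L c ^ k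
  have hPk : ∀ k ∈ Finset.range m, k ≠ 0 → ∑ c ∈ s, g.coeff k * L c ^ k = 0 := by
    intro k hk hk0
    rw [← Finset.mul_sum]
    have : ∑ c ∈ s, L c ^ k = ∑ c : Fin f → ZMod p, L c ^ k := by
      apply Finset.sum_subset (Finset.filter_subset _ _)
      intro c _ hc
      have : c = 0 := by
        by_contra hcon
        exact hc (Finset.mem_filter.mpr ⟨Finset.mem_univ c, hcon⟩)
      rw [this, hL0, zero_pow hk0]
    rw [this, sum_lin_pow_eq_zero p b hk0 (by rw [← hm]; exact Finset.mem_range.mp hk), mul_zero]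
  have hsplit : ∑ k ∈ Finset.range m, ∑ c ∈ s, g.coeff k * L c ^ k
      = ∑ c ∈ s, g.coeff 0 * L c ^ 0 := by
    rw [Finset.sum_eq_single 0]
    · intro k hk hkne
      exact hPk k hk hkne
    · intro h0
      exact absurd (Finset.mem_range.mpr (by omega)) h0
  rw [hsplit]
  simp_rw [pow_zero, mul_one]
  rw [Finset.sum_const, hcard, nsmul_eq_mul]
  -- (m : A) = -1
  have hmA : ((m : ℕ) : A) = -1 := by
    rw [hm, Nat.cast_sub (Nat.one_le_pow _ _ (by omega)), Nat.cast_pow, Nat.cast_one]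
    rw [show ((p : A)) = 0 from CharP.cast_eq_zero A p, zero_pow (by omega), zero_sub]
  -- g.coeff 0 = (-1)^m * ∏ L c
  have hg0 : g.coeff 0 = (-1) ^ m * ∏ c ∈ s, L c := by
    rw [Polynomial.coeff_zero_eq_eval_zero, hg, Polynomial.eval_prod]
    simp only [Polynomial.eval_sub, Polynomial.eval_X, Polynomial.eval_C, zero_sub]
    have hneg : ∀ x ∈ s, -L x = -1 * L x := fun x _ => by ring
    rw [Finset.prod_congr rfl hneg, Finset.prod_mul_distrib, Finset.prod_const, hcard]
  rw [hg0, hmA]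
  ring

/-- The coefficient of `∏ x_j^(p-1)` in `∏_j (∑_i b_i^(p^j) x_i)^(p-1)`, viewed as a
polynomial in the `b_i` (coefficients in `MvPolynomial (Fin f) F`), equals
`(-1)^((p^f-1)/(p-1)) ∏_{c ∈ 𝔽_p^f \ {0}} (∑_i c_i b_i)`. -/
theorem stmt1 (p f : ℕ) [Fact p.Prime] (hf : 1 ≤ f) (F : Type*) [Field F] [CharP F p] :
    MvPolynomial.coeff (Finsupp.equivFunOnFinite.symm fun _ : Fin f => p - 1)
      (∏ j : Fin f,
        (∑ i : Fin f,
          MvPolynomial.C ((MvPolynomial.X i : MvPolynomial (Fin f) F) ^ p ^ (j : ℕ)) *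
            MvPolynomial.X i) ^ (p - 1))
    = (-1) ^ ((p ^ f - 1) / (p - 1)) *
        ∏ c ∈ Finset.univ.filter (fun c : Fin f → ZMod p => c ≠ 0),
          ∑ i : Fin f,
            MvPolynomial.C (ZMod.castHom (dvd_refl p) F (c i)) * MvPolynomial.X i := by
  classical
  have hp : p.Prime := Fact.out
  have hp2 : 2 ≤ p := hp.two_le
  have hm1 : 1 ≤ p ^ f - 1 := by
    have h2 : p ^ 1 ≤ p ^ f := Nat.pow_le_pow_right (by omega) hf
    rw [pow_one] at h2
    have h3 : 1 ≤ p ^ f := by omega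
    omega
  -- homogeneity
  have hhom : (∏ j : Fin f,
      (∑ i : Fin f,
        MvPolynomial.C ((MvPolynomial.X i : MvPolynomial (Fin f) F) ^ p ^ (j : ℕ)) *
          MvPolynomial.X i) ^ (p - 1)).IsHomogeneous (f * (p - 1)) := by
    have h1 : ∀ j : Fin f, (∑ i : Fin f,
        MvPolynomial.C ((MvPolynomial.X i : MvPolynomial (Fin f) F) ^ p ^ (j : ℕ)) *
          MvPolynomial.X i).IsHomogeneous 1 :=
      fun j => MvPolynomial.IsHomogeneous.sum _ _ _ fun i _ =>
        MvPolynomial.isHomogeneous_C_mul_X _ _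
    have h2 := MvPolynomial.IsHomogeneous.prod Finset.univ _ (fun _ : Fin f => p - 1)
      (fun j _ => by simpa using (h1 j).pow (p - 1))
    simpa [Finset.sum_const, Finset.card_univ, smul_eq_mul] using h2
  -- evaluation
  have hcast : (ZMod.castHom (dvd_refl p) (MvPolynomial (Fin f) F))
      = (MvPolynomial.C : F →+* MvPolynomial (Fin f) F).comp (ZMod.castHom (dvd_refl p) F) :=
    RingHom.ext_zmod _ _
  have heval : ∀ c : Fin f → ZMod p,
      MvPolynomial.eval (fun i => ZMod.castHom (dvd_refl p) (MvPolynomial (Fin f) F) (c i))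
        (∏ j : Fin f,
          (∑ i : Fin f,
            MvPolynomial.C ((MvPolynomial.X i : MvPolynomial (Fin f) F) ^ p ^ (j : ℕ)) *
              MvPolynomial.X i) ^ (p - 1))
      = (∑ i : Fin f, MvPolynomial.C (ZMod.castHom (dvd_refl p) F (c i)) * MvPolynomial.X i)
          ^ (p ^ f - 1) := by
    intro c
    rw [map_prod]
    have hstep : ∀ j : Fin f,
        MvPolynomial.eval (fun i => ZMod.castHom (dvd_refl p) (MvPolynomial (Fin f) F) (c i))
          ((∑ i : Fin f,
            MvPolynomial.C ((MvPolynomial.X i : MvPolynomial (Fin f) F) ^ p ^ (j : ℕ)) *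
              MvPolynomial.X i) ^ (p - 1))
        = ((∑ i : Fin f, MvPolynomial.C (ZMod.castHom (dvd_refl p) F (c i)) * MvPolynomial.X i)
            ^ p ^ (j : ℕ)) ^ (p - 1) := by
      intro j
      rw [map_pow, map_sum]
      congr 1
      have hfrob : (∑ i : Fin f, MvPolynomial.C (ZMod.castHom (dvd_refl p) F (c i)) *
            MvPolynomial.X i) ^ p ^ (j : ℕ)
          = ∑ i : Fin f, MvPolynomial.C (ZMod.castHom (dvd_refl p) F (c i)) *
              MvPolynomial.X i ^ p ^ (j : ℕ) := by
        rw [sum_pow_char_pow]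
        apply Finset.sum_congr rfl
        intro i _
        rw [mul_pow, ← map_pow, ← map_pow (ZMod.castHom (dvd_refl p) F), ZMod.pow_card_pow]
      rw [hfrob]
      apply Finset.sum_congr rfl
      intro i _
      rw [map_mul, MvPolynomial.eval_C, MvPolynomial.eval_X, hcast]
      rw [RingHom.coe_comp, Function.comp_apply]
      ring
    rw [Finset.prod_congr rfl fun j _ => hstep j]
    simp_rw [← pow_mul]
    rw [Finset.prod_pow_eq_pow_sum]
    congr 1
    rw [Fin.sum_univ_eq_sum_range (fun j => p ^ j * (p - 1)) f, ← Finset.sum_mul, mul_comm,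
      geom_aux (by omega : 1 ≤ p) f]
  -- put it together
  have hB := coeff_eq_sum_eval p _ hhom
  rw [Finset.sum_congr rfl fun c _ => heval c] at hB
  have hdrop : ∑ c : Fin f → ZMod p,
      (∑ i : Fin f, MvPolynomial.C (ZMod.castHom (dvd_refl p) F (c i)) * MvPolynomial.X i)
        ^ (p ^ f - 1)
      = ∑ c ∈ Finset.univ.filter (fun c : Fin f → ZMod p => c ≠ 0),
        (∑ i : Fin f, MvPolynomial.C (ZMod.castHom (dvd_refl p) F (c i)) * MvPolynomial.X i)
          ^ (p ^ f - 1) := by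
    symm
    apply Finset.sum_subset (Finset.filter_subset _ _)
    intro c _ hc
    have hc0 : c = 0 := by
      by_contra hcon
      exact hc (Finset.mem_filter.mpr ⟨Finset.mem_univ c, hcon⟩)
    subst hc0
    have hz : (∑ i : Fin f, MvPolynomial.C (ZMod.castHom (dvd_refl p) F ((0 : Fin f → ZMod p) i))
        * MvPolynomial.X i) = (0 : MvPolynomial (Fin f) F) := by
      simp
    rw [hz, zero_pow (by omega)]
  have hkey := sum_pow_eq_prod p hf (fun i => (MvPolynomial.X i : MvPolynomial (Fin f) F))
  rw [hcast] at hkey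
  simp only [RingHom.coe_comp, Function.comp_apply] at hkey
  rw [hdrop, hkey] at hB
  have hsq : ((-1 : MvPolynomial (Fin f) F) ^ f) * ((-1) ^ f) = 1 := by
    rw [← pow_add]
    exact Even.neg_one_pow ⟨f, rfl⟩
  have hX : (-1 : MvPolynomial (Fin f) F) ^ f * ((-1) ^ (p ^ f - 1) *
      ∏ c ∈ Finset.univ.filter (fun c : Fin f → ZMod p => c ≠ 0),
        ∑ i : Fin f, MvPolynomial.C (ZMod.castHom (dvd_refl p) F (c i)) * MvPolynomial.X i)
      = MvPolynomial.coeff (Finsupp.equivFunOnFinite.symm fun _ : Fin f => p - 1)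
        (∏ j : Fin f,
          (∑ i : Fin f,
            MvPolynomial.C ((MvPolynomial.X i : MvPolynomial (Fin f) F) ^ p ^ (j : ℕ)) *
              MvPolynomial.X i) ^ (p - 1)) := by
    rw [hB, ← mul_assoc, hsq, one_mul]
  rw [← hX, ← mul_assoc, sign_aux p f hp]
end

section
/- Let q = p^f and let F be a field containing 𝔽_q. The f maps φ_i : 𝔽_q → F defined by φ_i(a) = a^{p^i} for 0 ≤ i ≤ f-1 form an F-basis of the F-vector space Hom_{𝔽_p}(𝔽_q, F) of 𝔽_p-linear maps from 𝔽_q to F. -/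
/-- The maps `a ↦ a^(p^i)` (`0 ≤ i ≤ f-1`), from a finite field `K` with `p^f` elements
into a field `F` containing it, form an `F`-basis of the `F`-vector space of
`𝔽_p`-linear maps `K → F`. -/
theorem stmt4 (p f : ℕ) [Fact p.Prime] (hf : 1 ≤ f)
    (K F : Type*) [Field K] [Fintype K] [Field F]
    (hcard : Fintype.card K = p ^ f)
    [Algebra (ZMod p) K] [Algebra (ZMod p) F]
    (i : K →+* F) :
    ∃ φ : Fin f → (K →ₗ[ZMod p] F),
      (∀ (j : Fin f) (a : K), φ j a = i a ^ p ^ (j : ℕ)) ∧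
      LinearIndependent F φ ∧ Submodule.span F (Set.range φ) = ⊤ := by
  classical
  have hp : p.Prime := Fact.out
  haveI : CharP F p := charP_of_injective_ringHom (algebraMap (ZMod p) F).injective p
  haveI : ExpChar F p := .prime hp
  set g : Fin f → (K →+* F) := fun j => (iterateFrobenius F p (j : ℕ)).comp i with hg
  have hgval : ∀ (j : Fin f) (a : K), g j a = i a ^ p ^ (j : ℕ) := fun j a => rfl
  have hsmul : ∀ (h : K →+* F) (c : ZMod p) (a : K), h (c • a) = c • h a := by
    intro h c a
    rw [Algebra.smul_def, map_mul, Algebra.smul_def]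
    congr 1
    exact RingHom.congr_fun
      (Subsingleton.elim (h.comp (algebraMap (ZMod p) K)) (algebraMap (ZMod p) F)) c
  set φ : Fin f → (K →ₗ[ZMod p] F) := fun j =>
    { toFun := g j, map_add' := map_add _, map_smul' := hsmul (g j) } with hφdef
  have hφ : ∀ (j : Fin f) (a : K), φ j a = i a ^ p ^ (j : ℕ) := fun j a => rfl
  -- distinctness of the associated monoid homs
  have hinj : Function.Injective (fun j : Fin f => ((g j : K →* F))) := by
    obtain ⟨x, hx⟩ := IsCyclic.exists_generator (α := Kˣ)
    have hord : orderOf x = p ^ f - 1 := by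
      rw [orderOf_eq_card_of_forall_mem_zpowers hx, Nat.card_eq_fintype_card,
        Fintype.card_units, hcard]
    have key : ∀ j j' : Fin f, (j : ℕ) ≤ (j' : ℕ) →
        ((g j : K →* F)) = (g j' : K →* F) → j = j' := by
      intro j j' hle heq
      have hvK : (x : K) ^ p ^ (j : ℕ) = (x : K) ^ p ^ (j' : ℕ) := by
        have h1 : g j (x : K) = g j' (x : K) := DFunLike.congr_fun heq (x : K)
        rw [hgval, hgval, ← map_pow, ← map_pow] at h1
        exact i.injective h1
      have hux : x ^ p ^ (j : ℕ) = x ^ p ^ (j' : ℕ) := by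
        ext
        push_cast
        exact hvK
      have hmod : p ^ (j : ℕ) ≡ p ^ (j' : ℕ) [MOD p ^ f - 1] := by
        rw [← hord]; exact (pow_eq_pow_iff_modEq).mp hux
      have hdvd : (p ^ f - 1) ∣ p ^ (j' : ℕ) - p ^ (j : ℕ) :=
        (Nat.modEq_iff_dvd' (Nat.pow_le_pow_right hp.one_lt.le hle)).mp hmod
      have hsplit : p ^ (j' : ℕ) - p ^ (j : ℕ) = p ^ (j : ℕ) * (p ^ ((j' : ℕ) - (j : ℕ)) - 1) := by
        rw [Nat.mul_sub, ← pow_add, mul_one]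
        congr 2
        omega
      have hcop : (p ^ f - 1).Coprime (p ^ (j : ℕ)) := by
        apply Nat.Coprime.pow_right
        have hnd : ¬ p ∣ (p ^ f - 1) := by
          intro h
          have h2 : p ∣ p ^ f := dvd_pow_self p (by omega)
          have h3 : p ∣ 1 := by
            have h4 := Nat.dvd_sub h2 h
            have h5 : 1 ≤ p ^ f := Nat.one_le_pow _ _ hp.pos
            have h6 : p ^ f - (p ^ f - 1) = 1 := by omega
            rwa [h6] at h4
          have := Nat.dvd_one.mp h3
          have := hp.two_le
          omega
        exact ((hp.coprime_iff_not_dvd).mpr hnd).symm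
      have hdvd2 : (p ^ f - 1) ∣ p ^ ((j' : ℕ) - (j : ℕ)) - 1 := by
        rw [hsplit] at hdvd
        exact (Nat.Coprime.dvd_of_dvd_mul_left hcop hdvd)
      have : (j' : ℕ) - (j : ℕ) = 0 := by
        by_contra hd
        have hdpos : 1 ≤ (j' : ℕ) - (j : ℕ) := by omega
        have hlt : p ^ ((j' : ℕ) - (j : ℕ)) < p ^ f :=
          Nat.pow_lt_pow_right hp.one_lt (by omega)
        have hpos : 0 < p ^ ((j' : ℕ) - (j : ℕ)) - 1 := by
          have : 2 ≤ p ^ ((j' : ℕ) - (j : ℕ)) :=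
            le_trans hp.two_le (Nat.le_self_pow (by omega) p)
          omega
        have := Nat.le_of_dvd hpos hdvd2
        have hpf : 2 ≤ p ^ f := le_trans hp.two_le (Nat.le_self_pow (by omega) p)
        omega
      exact Fin.ext (by omega)
    intro j j' heq
    rcases le_total (j : ℕ) (j' : ℕ) with h | h
    · exact key j j' h heq
    · exact (key j' j h heq.symm).symm
  -- linear independence
  have hLI : LinearIndependent F φ := by
    apply LinearIndependent.of_comp (LinearMap.ltoFun (ZMod p) K F F)
    have h1 : LinearIndependent F
        (fun j : Fin f => (((g j : K →* F)) : K → F)) :=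
      (linearIndependent_monoidHom K F).comp _ hinj
    convert h1 using 1
    rfl
  -- dimension count
  have hfrK : Module.finrank (ZMod p) K = f := by
    have hc := Module.card_eq_pow_finrank (K := ZMod p) (V := K)
    rw [ZMod.card, hcard] at hc
    exact Nat.pow_right_injective hp.two_le hc.symm
  haveI : Module.Finite (ZMod p) K := Module.Finite.of_finite
  let b : Module.Basis (Fin (Module.finrank (ZMod p) K)) (ZMod p) K := Module.finBasis (ZMod p) K
  have e := (b.constr F (M' := F)).symm
  haveI : FiniteDimensional F (K →ₗ[ZMod p] F) :=
    Module.Finite.equiv (b.constr F (M' := F))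
  have hfr : Module.finrank F (K →ₗ[ZMod p] F) = f := by
    rw [e.finrank_eq, Module.finrank_fin_fun, hfrK]
  haveI : Nonempty (Fin f) := ⟨⟨0, hf⟩⟩
  refine ⟨φ, hφ, hLI, hLI.span_eq_top_of_card_eq_finrank ?_⟩
  simp [hfr]
end

section
/- Let F be a field, q ≥ 2 an integer, and let φ_q be the F-linear endomorphism of the field of Laurent series F((T)) defined by φ_q(Σ c_n T^n) = Σ c_n T^{nq}. Suppose x ∈ F((T)) is nonzero and satisfies φ_q^d(x) = T^N · x for some d ≥ 1 and N ∈ ℤ. Then (q^d - 1) divides N and x = λ T^{N/(q^d-1)} for some λ ∈ F^×. -/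
/-- Let `φ_q` be the `F`-linear endomorphism of `F((T))` substituting `T ↦ T^q`
(characterized on coefficients). If `x ≠ 0` satisfies `φ_q^d(x) = T^N·x`, then
`(q^d - 1) ∣ N` and `x = λ·T^(N/(q^d-1))` for some `λ ∈ F^×`. -/
theorem stmt6 (F : Type*) [Field F] (q : ℕ) (hq : 2 ≤ q)
    (φ : LaurentSeries F → LaurentSeries F)
    (hφ : ∀ (x : LaurentSeries F) (m : ℤ),
      (φ x).coeff m = if ((q : ℤ)) ∣ m then x.coeff (m / (q : ℤ)) else 0)
    (d : ℕ) (hd : 1 ≤ d) (N : ℤ)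
    (x : LaurentSeries F) (hx : x ≠ 0)
    (heq : φ^[d] x = HahnSeries.single N (1 : F) * x) :
    ((q : ℤ) ^ d - 1) ∣ N ∧
      ∃ l : F, l ≠ 0 ∧ x = HahnSeries.single (N / ((q : ℤ) ^ d - 1)) l := by
  have hq0 : (q : ℤ) ≠ 0 := by positivity
  -- coefficient formula for iterates
  have hiter : ∀ (k : ℕ) (y : LaurentSeries F) (m : ℤ),
      (φ^[k] y).coeff m = if ((q : ℤ)) ^ k ∣ m then y.coeff (m / (q : ℤ) ^ k) else 0 := by
    intro k
    induction k with
    | zero => intro y m; simp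
    | succ k ih =>
      intro y m
      rw [Function.iterate_succ_apply', hφ]
      by_cases h : ((q : ℤ)) ^ (k + 1) ∣ m
      · obtain ⟨t, rfl⟩ := h
        have h1 : (q : ℤ) ∣ (q : ℤ) ^ (k + 1) * t := by
          exact Dvd.dvd.mul_right (dvd_pow_self _ (Nat.succ_ne_zero k)) t
        rw [if_pos h1, ih]
        have h2 : ((q : ℤ)) ^ (k + 1) * t / (q : ℤ) = (q : ℤ) ^ k * t := by
          rw [pow_succ, mul_comm ((q:ℤ)^k) (q:ℤ), mul_assoc, Int.mul_ediv_cancel_left _ hq0]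
        rw [h2, if_pos (Dvd.intro t rfl), if_pos ⟨t, rfl⟩,
          Int.mul_ediv_cancel_left _ (pow_ne_zero _ hq0),
          Int.mul_ediv_cancel_left _ (pow_ne_zero _ hq0)]
      · rw [if_neg h]
        by_cases h1 : ((q : ℤ)) ∣ m
        · obtain ⟨t, rfl⟩ := h1
          rw [if_pos ⟨t, rfl⟩, Int.mul_ediv_cancel_left _ hq0, ih]
          rw [if_neg]
          intro ⟨s, hs⟩
          exact h ⟨s, by rw [hs]; ring⟩
        · rw [if_neg h1]
  set Q : ℤ := (q : ℤ) ^ d with hQ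
  have hQ2 : 2 ≤ Q := by
    calc (2 : ℤ) ≤ (q : ℤ) := by exact_mod_cast hq
    _ = (q : ℤ) ^ 1 := (pow_one _).symm
    _ ≤ Q := pow_le_pow_right₀ (by omega) hd
  have hQ0 : Q ≠ 0 := by omega
  have hQpos : 0 < Q := by omega
  -- main coefficient identity
  have key : ∀ m : ℤ, (if Q ∣ m then x.coeff (m / Q) else 0) = x.coeff (m - N) := by
    intro m
    have := congrArg (fun y : LaurentSeries F => y.coeff m) heq
    rw [hiter d x m] at this
    rw [this]
    have hm : m = (m - N) + N := by ring
    rw [hm, HahnSeries.coeff_single_mul_add, one_mul]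
    congr 1
    ring
  have H1 : ∀ n : ℤ, x.coeff (Q * n - N) = x.coeff n := by
    intro n
    have := key (Q * n)
    rw [if_pos ⟨n, rfl⟩, Int.mul_ediv_cancel_left _ hQ0] at this
    exact this.symm
  have H2 : ∀ n : ℤ, x.coeff n ≠ 0 → Q ∣ (n + N) ∧ x.coeff ((n + N) / Q) ≠ 0 := by
    intro n hn
    have := key (n + N)
    rw [add_sub_cancel_right] at this
    by_cases h : Q ∣ (n + N)
    · rw [if_pos h] at this; exact ⟨h, this ▸ hn⟩
    · rw [if_neg h] at this; exact absurd this.symm hn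
  set v : ℤ := x.order with hv
  have hvc : x.coeff v ≠ 0 := HahnSeries.coeff_order_eq_zero.not.2 hx
  have hmin : ∀ n : ℤ, x.coeff n ≠ 0 → v ≤ n := fun n hn =>
    x.order_le_of_coeff_ne_zero hn
  -- N = (Q - 1) * v
  have hNle : N ≤ (Q - 1) * v := by
    have h1 : x.coeff (Q * v - N) ≠ 0 := by rw [H1]; exact hvc
    have := hmin _ h1
    linarith [show (Q-1)*v = Q*v - v from by ring]
  have hNge : (Q - 1) * v ≤ N := by
    obtain ⟨hdvd, hu⟩ := H2 v hvc
    have h1 := hmin _ hu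
    have h2 : Q * ((v + N) / Q) = v + N := Int.mul_ediv_cancel' hdvd
    nlinarith [h1, h2]
  have hNv : N = (Q - 1) * v := le_antisymm hNle hNge
  have hdvd : (Q - 1) ∣ N := ⟨v, hNv⟩
  have hvdiv : N / (Q - 1) = v := by
    rw [hNv, Int.mul_ediv_cancel_left _ (by omega)]
  refine ⟨hdvd, x.coeff v, hvc, ?_⟩
  rw [hvdiv]
  -- support is a singleton
  have huniq : ∀ n : ℤ, x.coeff n ≠ 0 → n = v := by
    by_contra hcon
    push_neg at hcon
    set T : Set ℤ := x.support \ {v} with hT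
    have hTwf : T.IsWF := x.isWF_support.mono Set.diff_subset
    have hTne : T.Nonempty := by
      obtain ⟨n, hn, hnv⟩ := hcon
      exact ⟨n, hn, hnv⟩
    set w : ℤ := hTwf.min hTne with hw
    have hwT : w ∈ T := hTwf.min_mem hTne
    have hwc : x.coeff w ≠ 0 := hwT.1
    have hwv : w ≠ v := hwT.2
    have hvw : v < w := lt_of_le_of_ne (hmin _ hwc) (Ne.symm hwv)
    obtain ⟨hdw, huc⟩ := H2 w hwc
    set u : ℤ := (w + N) / Q with hu
    have hQu : Q * u = w + N := Int.mul_ediv_cancel' hdw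
    have hvu : v ≤ u := hmin _ huc
    have huv : u ≠ v := by
      intro h
      rw [h] at hQu
      nlinarith [hNv]
    have huT : u ∈ T := ⟨huc, huv⟩
    have hwu : w ≤ u := not_lt.mp (hTwf.not_lt_min hTne huT)
    nlinarith [hNv, hQu]
  ext n
  rw [HahnSeries.coeff_single]
  split_ifs with h
  · rw [h]
  · by_contra hne
    exact h (huniq n hne)
end

section
/- Let R be a commutative ring, I ⊆ R an ideal with R complete and separated for the I-adic topology, and let φ : R → R be a ring endomorphism with φ(I) ⊆ I^2. Then for every u ∈ 1 + I there exists a unique C ∈ 1 + I satisfying C = u·φ(C); moreover C equals the (I-adically convergent) infinite product ∏_{n≥0} φ^n(u). -/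
/-- Let `R` be `I`-adically complete and separated and `φ : R → R` a ring endomorphism
with `φ(I) ⊆ I²`. For every `u ∈ 1 + I` there is a unique `C ∈ 1 + I` with `C = u·φ(C)`;
moreover `C` is the `I`-adic limit of the partial products `∏_{n<m} φ^n(u)`. -/
theorem stmt9 (R : Type*) [CommRing R] (I : Ideal R) [IsAdicComplete I R]
    (φ : R →+* R) (hφ : ∀ a ∈ I, φ a ∈ I ^ 2)
    (u : R) (hu : u - 1 ∈ I) :
    (∃! C : R, C - 1 ∈ I ∧ C = u * φ C) ∧
    (∀ C : R, C - 1 ∈ I → C = u * φ C →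
      ∀ k : ℕ, ∃ N : ℕ, ∀ m ≥ N,
        (∏ n ∈ Finset.range m, (⇑φ)^[n] u) - C ∈ I ^ k) := by
  -- φ maps I^k into I^(2k)
  have hmap : ∀ k : ℕ, ∀ x ∈ I ^ k, φ x ∈ I ^ (2 * k) := by
    intro k x hx
    have h1 : Ideal.map φ I ≤ I ^ 2 := Ideal.map_le_iff_le_comap.2 fun a ha => hφ a ha
    have h2 : Ideal.map φ (I ^ k) ≤ I ^ (2 * k) := by
      rw [Ideal.map_pow]
      calc (Ideal.map φ I) ^ k ≤ (I ^ 2) ^ k := Ideal.pow_right_mono h1 k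
        _ = I ^ (2 * k) := by rw [← pow_mul]
    exact h2 (Ideal.mem_map_of_mem φ hx)
  -- φ^[n] u - 1 ∈ I^(n+1)
  have hun : ∀ n : ℕ, (⇑φ)^[n] u - 1 ∈ I ^ (n + 1) := by
    intro n
    induction n with
    | zero => simpa using hu
    | succ n ih =>
      have : (⇑φ)^[n+1] u - 1 = φ ((⇑φ)^[n] u - 1) := by
        rw [Function.iterate_succ_apply', map_sub, map_one]
      rw [this]
      have := hmap (n + 1) _ ih
      exact Ideal.pow_le_pow_right (by omega) this
  set P : ℕ → R := fun m => ∏ n ∈ Finset.range m, (⇑φ)^[n] u with hP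
  -- successive differences
  have hstep : ∀ m : ℕ, P (m + 1) - P m ∈ I ^ (m + 1) := by
    intro m
    have : P (m + 1) - P m = P m * ((⇑φ)^[m] u - 1) := by
      rw [hP]; simp [Finset.prod_range_succ]; ring
    rw [this]
    exact Ideal.mul_mem_left _ _ (hun m)
  -- telescoping
  have htel : ∀ m n : ℕ, m ≤ n → P n - P m ∈ I ^ m := by
    intro m n hmn
    induction n, hmn using Nat.le_induction with
    | base => simp
    | succ n hmn ih =>
      have : P (n + 1) - P m = (P (n + 1) - P n) + (P n - P m) := by ring
      rw [this]
      exact add_mem (Ideal.pow_le_pow_right (by omega) (hstep n)) ih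
  -- limit
  obtain ⟨L, hL⟩ := IsPrecomplete.prec (IsAdicComplete.toIsPrecomplete (I := I) (M := R))
    (f := P) (fun {m n} h => by
      rw [SModEq.sub_mem, Ideal.smul_top_eq_map]
      simpa using neg_mem (htel m n h))
  have hLP : ∀ n : ℕ, P n - L ∈ I ^ n := by
    intro n
    have := (hL n)
    rw [SModEq.sub_mem, Ideal.smul_top_eq_map] at this
    simpa using this
  have hL1 : L - 1 ∈ I := by
    have : L - 1 = -(P 1 - L) + (P 1 - 1) := by ring
    rw [this]
    have h1 : P 1 - 1 ∈ I := by
      have : P 1 = u := by simp [hP]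
      rw [this]; exact hu
    exact add_mem (neg_mem (by simpa using hLP 1)) h1
  -- the key algebraic identity: u * φ (P m) = P (m+1)
  have hshift : ∀ m : ℕ, u * φ (P m) = P (m + 1) := by
    intro m
    rw [hP]
    simp only [map_prod]
    rw [Finset.prod_range_succ']
    simp only [Function.iterate_succ_apply, Function.iterate_zero_apply]
    rw [mul_comm]
    congr 1
    apply Finset.prod_congr rfl
    intro i _
    rw [← Function.iterate_succ_apply, Function.iterate_succ_apply']
  have hsep : ∀ x : R, (∀ m : ℕ, x ∈ I ^ m) → x = 0 := by
    intro x hx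
    refine IsHausdorff.haus (IsAdicComplete.toIsHausdorff (I := I) (M := R)) x fun n => ?_
    rw [SModEq.sub_mem, Ideal.smul_top_eq_map]
    simpa using hx n
  have hfix : L = u * φ L := by
    have key : ∀ m : ℕ, L - u * φ L ∈ I ^ m := by
      intro m
      have h1 : L - u * φ L = -(P (m + 1) - L) + (u * φ (P m) - u * φ L)
          - (u * φ (P m) - P (m + 1)) := by ring
      rw [h1]
      have h2 : u * φ (P m) - u * φ L = u * φ (P m - L) := by rw [map_sub]; ring
      refine sub_mem (add_mem (neg_mem ?_) ?_) ?_
      · exact Ideal.pow_le_pow_right (by omega) (hLP (m + 1))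
      · rw [h2]
        exact Ideal.mul_mem_left _ _
          (Ideal.pow_le_pow_right (by omega) (hmap m _ (hLP m)))
      · rw [hshift m]; simp
    exact sub_eq_zero.mp (hsep _ key)
  -- uniqueness
  have huniq : ∀ C C' : R, C - 1 ∈ I → C = u * φ C → C' - 1 ∈ I → C' = u * φ C' → C = C' := by
    intro C C' hC1 hCe hC'1 hC'e
    have key : ∀ k : ℕ, C - C' ∈ I ^ (k + 1) := by
      intro k
      induction k with
      | zero =>
        have : C - C' = (C - 1) - (C' - 1) := by ring
        rw [this, pow_one]
        exact sub_mem hC1 hC'1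
      | succ k ih =>
        have h1 : C - C' = u * φ (C - C') := by
          rw [map_sub, mul_sub, ← hCe, ← hC'e]
        rw [h1]
        exact Ideal.mul_mem_left _ _
          (Ideal.pow_le_pow_right (by omega) (hmap (k + 1) _ ih))
    apply sub_eq_zero.mp
    exact hsep _ fun m => Ideal.pow_le_pow_right (by omega) (key m)
  constructor
  · exact ⟨L, ⟨hL1, hfix⟩, fun C hC => huniq C L hC.1 hC.2 hL1 hfix⟩
  · intro C hC1 hCe k
    have hCL : C = L := huniq C L hC1 hCe hL1 hfix
    refine ⟨k, fun m hm => ?_⟩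
    rw [hCL]
    exact Ideal.pow_le_pow_right hm (hLP m)
end

section
/- Let f ≥ 1 and let S ⊆ ℤ/2fℤ be a subset such that for every x ∈ ℤ/2fℤ, exactly one of x and x+f lies in S. Let d be the smallest positive integer such that S - d = S (translation of S by -d). Then: (a) d divides 2f but d does not divide f; (b) d is even; (c) the cardinality of {j ∈ ℤ : 0 ≤ j ≤ d-1, (j mod 2f) ∈ S} equals d/2. -/
/-- Let `S ⊆ ℤ/2fℤ` contain exactly one of `x, x+f` for each `x`, and let `d` be the
smallest positive integer with `S - d = S`. Then `d ∣ 2f`, `d ∤ f`, `d` is even, and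
`#{0 ≤ j ≤ d-1 : j mod 2f ∈ S} = d/2`. -/
theorem stmt11 (f : ℕ) (hf : 1 ≤ f) (S : Finset (ZMod (2 * f)))
    (hS : ∀ x : ZMod (2 * f), Xor' (x ∈ S) ((x + (f : ZMod (2 * f))) ∈ S))
    (d : ℕ) (hd : 0 < d)
    (hinv : S.image (fun s => s - (d : ZMod (2 * f))) = S)
    (hmin : ∀ e : ℕ, 0 < e → S.image (fun s => s - (e : ZMod (2 * f))) = S → d ≤ e) :
    (d ∣ 2 * f ∧ ¬ d ∣ f) ∧ 2 ∣ d ∧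
      ((Finset.range d).filter (fun j : ℕ => (((j : ℕ) : ZMod (2 * f)) ∈ S))).card = d / 2 := by
  haveI : NeZero (2 * f) := ⟨by omega⟩
  have h2f0 : ((2 * f : ℕ) : ZMod (2 * f)) = 0 := ZMod.natCast_self _
  have hff : (f : ZMod (2 * f)) + (f : ZMod (2 * f)) = 0 := by
    have := h2f0; push_cast at this; linear_combination this
  -- image = S iff pointwise period
  have img_iff : ∀ c : ZMod (2 * f),
      (S.image (fun s => s - c) = S) ↔ (∀ x, x ∈ S ↔ x - c ∈ S) := by
    intro c
    constructor
    · intro h x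
      constructor
      · intro hx
        rw [← h]
        exact Finset.mem_image_of_mem _ hx
      · intro hx
        rw [← h] at hx
        obtain ⟨s, hs, hsx⟩ := Finset.mem_image.mp hx
        have hsxe : s = x := by
          have := sub_left_injective (G := ZMod (2 * f)) (b := c) hsx
          exact this
        exact hsxe ▸ hs
    · intro h
      ext y
      simp only [Finset.mem_image]
      constructor
      · rintro ⟨s, hs, rfl⟩
        exact (h s).mp hs
      · intro hy
        exact ⟨y + c, (h (y + c)).mpr (by simpa using hy), by ring⟩
  set Q : ZMod (2 * f) → Prop := fun c => ∀ x, x ∈ S ↔ x - c ∈ S with hQdef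
  have hQd : Q (d : ZMod (2 * f)) := (img_iff _).mp hinv
  have hQ0 : Q 0 := by intro x; simp
  have hQadd : ∀ a b, Q a → Q b → Q (a + b) := by
    intro a b ha hb x
    rw [ha x, hb (x - a), sub_sub]
  have hQneg : ∀ a, Q a → Q (-a) := by
    intro a ha x
    have := ha (x + a)
    simpa using this.symm
  have hQmul : ∀ m : ℕ, Q ((m * d : ℕ) : ZMod (2 * f)) := by
    intro m
    induction m with
    | zero => simpa using hQ0
    | succ m ih =>
      have : (((m + 1) * d : ℕ) : ZMod (2 * f)) = ((m * d : ℕ) : ZMod (2 * f)) + (d : ZMod (2 * f)) := by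
        push_cast; ring
      rw [this]
      exact hQadd _ _ ih hQd
  -- d divides 2f
  have hdvd : d ∣ 2 * f := by
    set q := (2 * f) / d with hq
    set r := (2 * f) % d with hr
    have hqr : 2 * f = q * d + r := by
      rw [hq, hr, Nat.mul_comm (2 * f / d) d]; exact (Nat.div_add_mod _ _).symm
    have hrd : r < d := Nat.mod_lt _ hd
    have hrcast : ((r : ℕ) : ZMod (2 * f)) = -(((q * d : ℕ)) : ZMod (2 * f)) := by
      have h0 : ((q * d + r : ℕ) : ZMod (2 * f)) = 0 := by rw [← hqr]; exact h2f0
      push_cast at h0 ⊢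
      linear_combination h0
    have hQr : Q ((r : ℕ) : ZMod (2 * f)) := by
      rw [hrcast]
      exact hQneg _ (hQmul q)
    have : r = 0 := by
      by_contra hr0
      have := hmin r (Nat.pos_of_ne_zero hr0) ((img_iff _).mpr hQr)
      omega
    exact Nat.dvd_of_mod_eq_zero this
  -- d does not divide f
  have hndvd : ¬ d ∣ f := by
    rintro ⟨m, hm⟩
    have hQf : Q ((f : ℕ) : ZMod (2 * f)) := by
      have := hQmul m
      rwa [show m * d = f from (Nat.mul_comm m d).trans hm.symm] at this
    obtain ⟨x, hx⟩ : ∃ x, x ∈ S := by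
      rcases hS 0 with ⟨h1, _⟩ | ⟨h1, _⟩
      · exact ⟨0, h1⟩
      · exact ⟨_, h1⟩
    have hx2 : x - (f : ZMod (2 * f)) = x + (f : ZMod (2 * f)) := by
      linear_combination -hff
    have := (hQf x).mp hx
    rw [hx2] at this
    rcases hS x with ⟨_, h2⟩ | ⟨_, h2⟩
    · exact h2 this
    · exact h2 hx
  -- d is even
  have heven : 2 ∣ d := by
    by_contra h2
    obtain ⟨t, ht⟩ := hdvd
    have h2t : 2 ∣ d * t := ⟨f, by omega⟩
    rcases (Nat.Prime.dvd_mul Nat.prime_two).mp h2t with h | h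
    · exact h2 h
    · obtain ⟨u, hu⟩ := h
      refine hndvd ⟨u, ?_⟩
      have h2du : 2 * f = 2 * (d * u) := by rw [ht, hu]; ring
      omega
  -- cardinality of S is f
  have hcardS : S.card = f := by
    have hcompl : S.card = Sᶜ.card := by
      apply Finset.card_bij' (fun x _ => x + (f : ZMod (2 * f))) (fun x _ => x + (f : ZMod (2 * f)))
      · intro a ha
        rw [Finset.mem_compl]
        rcases hS a with ⟨_, h2⟩ | ⟨_, h2⟩
        · exact h2
        · exact absurd ha h2
      · intro a ha
        rw [Finset.mem_compl] at ha
        rcases hS a with ⟨h1, _⟩ | ⟨h1, _⟩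
        · exact absurd h1 ha
        · exact h1
      · intro a _
        rw [add_assoc, hff, add_zero]
      · intro a _
        rw [add_assoc, hff, add_zero]
    have hcc : Sᶜ.card = Fintype.card (ZMod (2 * f)) - S.card := Finset.card_compl S
    have hcard : Fintype.card (ZMod (2 * f)) = 2 * f := ZMod.card _
    have hle : S.card ≤ 2 * f := by
      calc S.card ≤ Fintype.card (ZMod (2 * f)) := Finset.card_le_univ S
        _ = 2 * f := hcard
    omega
  set p : ℕ → Prop := fun j => ((j : ℕ) : ZMod (2 * f)) ∈ S with hp
  -- count over range (2f) equals card S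
  have hT : ((Finset.range (2 * f)).filter p).card = S.card := by
    apply Finset.card_bij' (fun j _ => ((j : ℕ) : ZMod (2 * f))) (fun x _ => x.val)
    · intro a ha
      exact (Finset.mem_filter.mp ha).2
    · intro x hx
      rw [Finset.mem_filter, Finset.mem_range]
      refine ⟨ZMod.val_lt x, ?_⟩
      show ((x.val : ℕ) : ZMod (2 * f)) ∈ S
      rw [ZMod.natCast_val, ZMod.cast_id]
      exact hx
    · intro a ha
      have := (Finset.mem_filter.mp ha).1
      rw [Finset.mem_range] at this
      exact ZMod.val_cast_of_lt this
    · intro x _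
      rw [ZMod.natCast_val, ZMod.cast_id]
  -- periodic block counting
  set c : ℕ := ((Finset.range d).filter p).card with hc
  have hblock : ∀ m : ℕ, ((Finset.range (m * d)).filter p).card = m * c := by
    intro m
    induction m with
    | zero => simp
    | succ m ih =>
      have hsplit : ((m + 1) * d) = m * d + d := by ring
      rw [hsplit]
      rw [Finset.card_filter] at ih ⊢
      rw [Finset.sum_range_add]
      have hshift : ∀ j ∈ Finset.range d,
          (if p (m * d + j) then 1 else 0) = (if p j then 1 else 0) := by
        intro j _
        have hpq : p (m * d + j) ↔ p j := by
          have := hQmul m (((m * d + j : ℕ) : ZMod (2 * f)))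
          simp only [hp]
          rw [this]
          congr! 1
          push_cast
          ring
        simp [hpq]
      rw [Finset.sum_congr rfl hshift, ih, ← Finset.card_filter, ← hc]
      ring
  -- conclude
  obtain ⟨k, hk⟩ := hdvd
  have hkd : k * d = 2 * f := by rw [Nat.mul_comm]; exact hk.symm
  have hkc : k * c = f := by
    have h1 := hblock k
    rw [hkd] at h1
    exact h1.symm.trans (hT.trans hcardS)
  have hkpos : 0 < k := by
    apply Nat.pos_of_ne_zero
    rintro rfl
    simp at hkd
    omega
  have hce : c = d / 2 := by
    apply Nat.eq_of_mul_eq_mul_left hkpos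
    rw [hkc]
    obtain ⟨e, he⟩ := heven
    have hd2 : d / 2 = e := by omega
    rw [hd2]
    have h2ke : 2 * (k * e) = 2 * f := by
      calc 2 * (k * e) = k * (2 * e) := by ring
        _ = k * d := by rw [← he]
        _ = 2 * f := hkd
    omega
  exact ⟨⟨⟨k, hk⟩, hndvd⟩, heven, hce⟩
end

section
/- Let f ≥ 1, let ℤ^f/ℤ denote the quotient of ℤ^f by the diagonal copy of ℤ, let n_0 = (0,1,2,…,f-1) ∈ ℤ^f, and let the symmetric group 𝔖_f act on ℤ^f by permuting coordinates: σ(n)_i = n_{σ^{-1}(i)}. Let (ℤ^f/ℤ)_0 be the image in ℤ^f/ℤ of {m ∈ ℤ^f : Σ_i m_i = 0}. Then every element of ℤ^f/ℤ of the form σ(n_0) + f·m (with σ ∈ 𝔖_f, m ∈ ℤ^f/ℤ) can be written as σ'(n_0) + f·m' in ℤ^f/ℤ for a unique pair (σ', m') with σ' ∈ 𝔖_f and m' ∈ (ℤ^f/ℤ)_0. -/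
/-- The diagonal copy of `ℤ` in `ℤ^f`. -/
def diagSub (f : ℕ) : Submodule ℤ (Fin f → ℤ) := Submodule.span ℤ {fun _ => (1 : ℤ)}

lemma mem_diagSub {f : ℕ} {x : Fin f → ℤ} :
    x ∈ diagSub f ↔ ∃ c : ℤ, ∀ i, x i = c := by
  rw [diagSub, Submodule.mem_span_singleton]
  constructor
  · rintro ⟨c, rfl⟩; exact ⟨c, fun i => by simp⟩
  · rintro ⟨c, h⟩; exact ⟨c, by funext i; simp [h i]⟩

lemma quot_eq_iff {f : ℕ} {a b : Fin f → ℤ} :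
    (diagSub f).mkQ a = (diagSub f).mkQ b ↔ ∃ c : ℤ, ∀ i, a i - b i = c := by
  simp only [Submodule.mkQ_apply, Submodule.Quotient.eq]
  exact mem_diagSub

/-- Uniqueness half. -/
lemma stmt12_uniq (f : ℕ) (hf : 1 ≤ f) (σ₁ σ₂ : Equiv.Perm (Fin f))
    (u₁ u₂ : Fin f → ℤ) (h₁ : ∑ i, u₁ i = 0) (h₂ : ∑ i, u₂ i = 0)
    (heq : (diagSub f).mkQ (fun i => ((σ₁⁻¹ i : Fin f) : ℤ)) + (f : ℤ) • (diagSub f).mkQ u₁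
      = (diagSub f).mkQ (fun i => ((σ₂⁻¹ i : Fin f) : ℤ)) + (f : ℤ) • (diagSub f).mkQ u₂) :
    σ₁ = σ₂ ∧ (diagSub f).mkQ u₁ = (diagSub f).mkQ u₂ := by
  rw [← map_smul, ← map_smul, ← map_add, ← map_add, quot_eq_iff] at heq
  obtain ⟨c, hc⟩ := heq
  have hf0 : (0:ℤ) < f := by exact_mod_cast hf
  simp only [Pi.add_apply, Pi.smul_apply, smul_eq_mul] at hc
  -- sum the identity over all i
  have hsum : (f : ℤ) * c = 0 := by
    have hT : (∑ i : Fin f, (((σ₁⁻¹ i : Fin f) : ℤ) + f * u₁ i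
        - (((σ₂⁻¹ i : Fin f) : ℤ) + f * u₂ i))) = ∑ _i : Fin f, c :=
      Finset.sum_congr rfl (fun i _ => hc i)
    have hperm : ∀ τ : Equiv.Perm (Fin f),
        ∑ i, ((τ⁻¹ i : Fin f) : ℤ) = ∑ i : Fin f, (i : ℤ) := fun τ =>
      Equiv.sum_comp τ⁻¹ (fun j : Fin f => (j : ℤ))
    simp only [Finset.sum_sub_distrib, Finset.sum_add_distrib, ← Finset.mul_sum, h₁, h₂,
      hperm σ₁, hperm σ₂, Finset.sum_const, Finset.card_univ, Fintype.card_fin,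
      nsmul_eq_mul, mul_zero, add_zero, sub_self] at hT
    linarith [hT]
  have hc0 : c = 0 := by
    have hne : (f : ℤ) ≠ 0 := ne_of_gt hf0
    exact (mul_eq_zero.mp hsum).resolve_left hne
  subst hc0
  have hcoord : ∀ i, ((σ₁⁻¹ i : Fin f) : ℤ) + f * u₁ i = ((σ₂⁻¹ i : Fin f) : ℤ) + f * u₂ i := by
    intro i; have := hc i; linarith
  have hσ : σ₁ = σ₂ := by
    have hinv : σ₁⁻¹ = σ₂⁻¹ := by
      ext i
      have h := hcoord i
      have b₁ : ((σ₁⁻¹ i : Fin f) : ℤ) < f := by exact_mod_cast (σ₁⁻¹ i).isLt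
      have b₂ : ((σ₂⁻¹ i : Fin f) : ℤ) < f := by exact_mod_cast (σ₂⁻¹ i).isLt
      have n₁ : (0:ℤ) ≤ ((σ₁⁻¹ i : Fin f) : ℤ) := Int.natCast_nonneg _
      have n₂ : (0:ℤ) ≤ ((σ₂⁻¹ i : Fin f) : ℤ) := Int.natCast_nonneg _
      have hdvd : ((σ₁⁻¹ i : Fin f) : ℤ) = ((σ₂⁻¹ i : Fin f) : ℤ) := by
        obtain ⟨k, hk⟩ : (f:ℤ) ∣ (((σ₁⁻¹ i : Fin f) : ℤ) - ((σ₂⁻¹ i : Fin f) : ℤ)) :=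
          ⟨u₂ i - u₁ i, by ring_nf; linarith⟩
        rcases lt_trichotomy k 0 with hk0 | hk0 | hk0
        · nlinarith
        · simp only [hk0, mul_zero] at hk; linarith
        · nlinarith
      exact_mod_cast hdvd
    have := congrArg (·⁻¹) hinv
    simpa using this
  subst hσ
  refine ⟨rfl, ?_⟩
  rw [quot_eq_iff]
  refine ⟨0, fun i => ?_⟩
  have h := hcoord i
  have hmul : (f:ℤ) * u₁ i = f * u₂ i := by linarith
  have := mul_left_cancel₀ (ne_of_gt hf0) hmul
  linarith

/-- In `ℤ^f/ℤ`, every element of the form `σ(n_0) + f·m` (with `n_0 = (0,1,…,f-1)`,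
`σ ∈ 𝔖_f`, `m ∈ ℤ^f/ℤ`) can be written as `σ'(n_0) + f·m'` for a unique pair `(σ', m')`
with `σ' ∈ 𝔖_f` and `m'` in the image of `{m : ∑ m_i = 0}`. -/
theorem stmt12 (f : ℕ) (hf : 1 ≤ f)
    (σ : Equiv.Perm (Fin f)) (m : (Fin f → ℤ) ⧸ diagSub f) :
    ∃! x : Equiv.Perm (Fin f) × ((Fin f → ℤ) ⧸ diagSub f),
      x.2 ∈ (diagSub f).mkQ '' {v : Fin f → ℤ | ∑ i, v i = 0} ∧
      (diagSub f).mkQ (fun i => ((x.1⁻¹ i : Fin f) : ℤ)) + (f : ℤ) • x.2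
        = (diagSub f).mkQ (fun i => ((σ⁻¹ i : Fin f) : ℤ)) + (f : ℤ) • m := by
  haveI : NeZero f := ⟨by omega⟩
  obtain ⟨v, rfl⟩ := (diagSub f).mkQ_surjective m
  set s : ℤ := ∑ i, v i with hs
  set d : ℤ := (-s) % f with hd
  have hf0 : (0:ℤ) < f := by exact_mod_cast hf
  have hd0 : 0 ≤ d := Int.emod_nonneg _ (ne_of_gt hf0)
  have hdf : d < f := Int.emod_lt_of_pos _ hf0
  set dn : ℕ := d.toNat with hdn
  have hdnf : dn < f := by omega
  have hdd : (dn : ℤ) = d := Int.toNat_of_nonneg hd0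
  -- the shifted permutation
  set σ' : Equiv.Perm (Fin f) := (σ⁻¹.trans (Equiv.addRight (Fin.ofNat f dn)))⁻¹ with hσ'
  have hσ'inv : ∀ i, σ'⁻¹ i = σ⁻¹ i + Fin.ofNat f dn := by
    intro i; simp [hσ']
  -- the carry vector
  set w : Fin f → ℤ := fun i => if f ≤ ((σ⁻¹ i : Fin f) : ℕ) + dn then 1 else 0 with hw
  have hkey : ∀ i, ((σ'⁻¹ i : Fin f) : ℤ) = ((σ⁻¹ i : Fin f) : ℤ) + d - f * w i := by
    intro i
    rw [hσ'inv i]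
    have hval : ((σ⁻¹ i + Fin.ofNat f dn : Fin f) : ℕ) = (((σ⁻¹ i : Fin f) : ℕ) + dn) % f := by
      rw [Fin.add_def]
      simp [Fin.val_ofNat, Nat.mod_eq_of_lt hdnf]
    by_cases hcase : f ≤ ((σ⁻¹ i : Fin f) : ℕ) + dn
    · have hlt : ((σ⁻¹ i : Fin f) : ℕ) + dn < 2 * f := by
        have := (σ⁻¹ i).isLt; omega
      have hmod : (((σ⁻¹ i : Fin f) : ℕ) + dn) % f = ((σ⁻¹ i : Fin f) : ℕ) + dn - f := by
        rw [Nat.mod_eq_sub_mod hcase, Nat.mod_eq_of_lt (by omega)]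
      rw [hval, hmod]
      simp only [hw, if_pos hcase]
      push_cast [hcase]
      omega
    · have hmod : (((σ⁻¹ i : Fin f) : ℕ) + dn) % f = ((σ⁻¹ i : Fin f) : ℕ) + dn :=
        Nat.mod_eq_of_lt (by omega)
      rw [hval, hmod]
      simp only [hw, if_neg hcase]
      push_cast
      omega
  -- sum of the carry vector is d
  have hwsum : ∑ i, w i = d := by
    have h1 : ∑ i, w i = ∑ j : Fin f, (if f ≤ (j : ℕ) + dn then (1:ℤ) else 0) :=
      Equiv.sum_comp σ⁻¹ (fun j : Fin f => if f ≤ (j : ℕ) + dn then (1:ℤ) else 0)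
    rw [h1, Finset.sum_boole]
    have hcard : (Finset.univ.filter (fun j : Fin f => f ≤ (j : ℕ) + dn)).card = dn := by
      rcases Nat.eq_zero_or_pos dn with h0 | h0
      · rw [h0]
        rw [Finset.filter_false_of_mem, Finset.card_empty]
        intro j _
        have := j.isLt
        omega
      · have hIci : (Finset.univ.filter (fun j : Fin f => f ≤ (j : ℕ) + dn))
            = Finset.Ici (⟨f - dn, by omega⟩ : Fin f) := by
          ext j
          simp only [Finset.mem_filter, Finset.mem_univ, true_and, Finset.mem_Ici, Fin.le_def]
          omega
        rw [hIci, Fin.card_Ici]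
        simp only [Fin.val_mk]
        omega
    rw [hcard, hdd]
  -- the correction constant
  set t : ℤ := (-s) / f with ht'
  have ht : s + d + f * t = 0 := by rw [hd, Int.emod_def]; ring
  -- the sum-zero representative
  set u : Fin f → ℤ := fun i => v i + w i + t with hu
  have husum : ∑ i, u i = 0 := by
    simp only [hu, Finset.sum_add_distrib, hwsum, ← hs, Finset.sum_const, Finset.card_univ,
      Fintype.card_fin, nsmul_eq_mul]
    linarith
  have hequ : (diagSub f).mkQ (fun i => ((σ'⁻¹ i : Fin f) : ℤ)) + (f : ℤ) • (diagSub f).mkQ u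
      = (diagSub f).mkQ (fun i => ((σ⁻¹ i : Fin f) : ℤ)) + (f : ℤ) • (diagSub f).mkQ v := by
    rw [← map_smul, ← map_smul, ← map_add, ← map_add, quot_eq_iff]
    refine ⟨d + f * t, fun i => ?_⟩
    have := hkey i
    simp only [Pi.add_apply, Pi.smul_apply, smul_eq_mul, hu]
    rw [this]
    ring
  refine ⟨(σ', (diagSub f).mkQ u), ⟨⟨u, husum, rfl⟩, hequ⟩, ?_⟩
  rintro ⟨τ, mq⟩ ⟨⟨u', hu', rfl⟩, heq'⟩
  have := stmt12_uniq f hf τ σ' u' u hu' husum (heq'.trans hequ.symm)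
  exact Prod.ext this.1 this.2
end

section
/- Let A be a commutative noetherian ring, φ : A → A a ring endomorphism, and 𝔭 ⊆ A an ideal with φ(𝔭) ⊆ 𝔭^q for some integer q ≥ 2. Let M, N be A-modules equipped with φ-semilinear endomorphisms φ_M, φ_N, and assume M is generated as an A-module by the image of φ_M. If f : M → N is an A-linear map commuting with the semilinear endomorphisms (f ∘ φ_M = φ_N ∘ f) and satisfying f(M) ⊆ 𝔭·N, then f(M) ⊆ 𝔭^{q^n}·N for every n ≥ 0. In particular, if ∩_{m≥0} 𝔭^m N = 0 then f = 0. -/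
/-- Let `φ : A → A` with `φ(𝔭) ⊆ 𝔭^q` (`q ≥ 2`), `M` generated by the image of a
`φ`-semilinear `φ_M`, and `f : M → N` an `A`-linear map commuting with the semilinear
endomorphisms and with `f(M) ⊆ 𝔭·N`. Then `f(M) ⊆ 𝔭^(q^n)·N` for all `n`, and `f = 0`
if `∩_m 𝔭^m N = 0`. -/
theorem stmt14 {A : Type*} [CommRing A] [IsNoetherianRing A] (φ : A →+* A)
    (𝔭 : Ideal A) (q : ℕ) (hq : 2 ≤ q) (hφ : ∀ a ∈ 𝔭, φ a ∈ 𝔭 ^ q)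
    (M N : Type*) [AddCommGroup M] [Module A M] [AddCommGroup N] [Module A N]
    (φM : M → M) (φN : N → N)
    (hφMadd : ∀ x y : M, φM (x + y) = φM x + φM y)
    (hφM : ∀ (a : A) (x : M), φM (a • x) = φ a • φM x)
    (hφNadd : ∀ x y : N, φN (x + y) = φN x + φN y)
    (hφN : ∀ (a : A) (x : N), φN (a • x) = φ a • φN x)
    (hgen : Submodule.span A (Set.range φM) = ⊤)
    (f : M →ₗ[A] N) (hcomm : ∀ x : M, f (φM x) = φN (f x))
    (hf : ∀ x : M, f x ∈ 𝔭 • (⊤ : Submodule A N)) :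
    (∀ n : ℕ, ∀ x : M, f x ∈ (𝔭 ^ (q ^ n)) • (⊤ : Submodule A N)) ∧
    ((⨅ m : ℕ, (𝔭 ^ m) • (⊤ : Submodule A N)) = ⊥ → f = 0) := by
  -- φ maps 𝔭^k into 𝔭^(k*q)
  have hφpow : ∀ (k : ℕ) (a : A), a ∈ 𝔭 ^ k → φ a ∈ 𝔭 ^ (k * q) := by
    intro k a ha
    have h1 : φ a ∈ Ideal.map φ (𝔭 ^ k) := Ideal.mem_map_of_mem φ ha
    have h2 : Ideal.map φ (𝔭 ^ k) = (Ideal.map φ 𝔭) ^ k := Ideal.map_pow φ 𝔭 k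
    have h3 : Ideal.map φ 𝔭 ≤ 𝔭 ^ q := by
      rw [Ideal.map_le_iff_le_comap]
      intro a ha; exact hφ a ha
    have h4 : (Ideal.map φ 𝔭) ^ k ≤ (𝔭 ^ q) ^ k := Ideal.pow_right_mono h3 k
    rw [← pow_mul, mul_comm] at h4
    exact h4 (h2 ▸ h1)
  -- φN maps 𝔭^k • ⊤ into 𝔭^(k*q) • ⊤
  have hφNmap : ∀ (k : ℕ) (y : N), y ∈ (𝔭 ^ k) • (⊤ : Submodule A N) →
      φN y ∈ (𝔭 ^ (k * q)) • (⊤ : Submodule A N) := by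
    intro k y hy
    refine Submodule.smul_induction_on hy ?_ ?_
    · intro a ha m _
      rw [hφN]
      exact Submodule.smul_mem_smul (hφpow k a ha) trivial
    · intro x y hx hy
      rw [hφNadd]
      exact Submodule.add_mem _ hx hy
  -- main step
  have step : ∀ k : ℕ, (∀ x : M, f x ∈ (𝔭 ^ k) • (⊤ : Submodule A N)) →
      ∀ x : M, f x ∈ (𝔭 ^ (k * q)) • (⊤ : Submodule A N) := by
    intro k hk x
    have hx : x ∈ Submodule.span A (Set.range φM) := hgen ▸ Submodule.mem_top
    refine Submodule.span_induction ?_ ?_ ?_ ?_ hx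
    · rintro _ ⟨y, rfl⟩
      rw [hcomm]
      exact hφNmap k (f y) (hk y)
    · simp
    · intro a b _ _ ha hb
      rw [map_add]; exact Submodule.add_mem _ ha hb
    · intro a b _ hb
      rw [map_smul]; exact Submodule.smul_mem _ a hb
  have main : ∀ n : ℕ, ∀ x : M, f x ∈ (𝔭 ^ (q ^ n)) • (⊤ : Submodule A N) := by
    intro n
    induction n with
    | zero => simpa using hf
    | succ n ih =>
      intro x
      have := step (q ^ n) ih x
      rwa [← pow_succ] at this
  refine ⟨main, ?_⟩
  intro hinf
  ext x
  have hx : f x ∈ (⨅ m : ℕ, (𝔭 ^ m) • (⊤ : Submodule A N)) := by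
    rw [Submodule.mem_iInf]
    intro m
    have h1 : f x ∈ (𝔭 ^ (q ^ m)) • (⊤ : Submodule A N) := main m x
    have h2 : (𝔭 ^ (q ^ m)) • (⊤ : Submodule A N) ≤ (𝔭 ^ m) • (⊤ : Submodule A N) :=
      Submodule.smul_mono_left (Ideal.pow_le_pow_right
        (le_of_lt (Nat.lt_pow_self (by omega : 1 < q) : m < q ^ m)))
    exact h2 h1
  rw [hinf] at hx
  simpa using hx
end
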